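/- Let ψ = α ∧ ⋀_{i∈B}(□_i β_i ∧ ⋀_{j=1}^{m_i} ◇_i γ_{ij}) and ψ' = α' ∧ ⋀_{i∈B}(□_i β'_i ∧ ⋀_{j=1}^{m'_i} ◇_i γ'_{ij}) be separability-based terms. Then ψ ∧ ψ' is logically equivalent in K_n to the separability-based term α'' ∧ ⋀_{i∈B}(□_i β''_i ∧ ⋀_{j=1}^{m_i} ◇_i(β'_i ∧ γ_{ij}) ∧ ⋀_{j=1}^{m'_i} ◇_i(β_i ∧ γ'_{ij})), where α'' ≡ α ∧ α' and β''_i ≡ β_i ∧ β'_i. -/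

import Mathlib

universe u v

inductive Fm (A P : Type) : Type
  | tru : Fm A P
  | var : P → Fm A P
  | neg : Fm A P → Fm A P
  | and : Fm A P → Fm A P → Fm A P
  | box : A → Fm A P → Fm A P

namespace Fm
variable {A P : Type}
def or (φ ψ : Fm A P) : Fm A P := neg ((neg φ).and (neg ψ))
def bot : Fm A P := neg tru
def dia (i : A) (φ : Fm A P) : Fm A P := neg (box i (neg φ))
end Fm

structure KM (A P : Type) where
  S : Type
  R : A → S → S → Prop
  V : S → P → Prop

variable {A P : Type}

def Sat (M : KM A P) : M.S → Fm A P → Prop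
  | _, .tru => True
  | s, .var p => M.V s p
  | s, .neg φ => ¬ Sat M s φ
  | s, .and φ ψ => Sat M s φ ∧ Sat M s ψ
  | s, .box i φ => ∀ t, M.R i s t → Sat M t φ

def Satisfiable (φ : Fm A P) : Prop := ∃ (M : KM A P) (s : M.S), Sat M s φ

def Entails (φ ψ : Fm A P) : Prop := ∀ (M : KM A P) (s : M.S), Sat M s φ → Sat M s ψ

def FEquiv (φ ψ : Fm A P) : Prop := Entails φ ψ ∧ Entails ψ φ

def IsProp : Fm A P → Prop
  | .tru => True
  | .var _ => True
  | .neg φ => IsProp φ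
  | .and φ ψ => IsProp φ ∧ IsProp ψ
  | .box _ _ => False

def Basic (φ : Fm A P) : Prop :=
  IsProp φ ∨ (∃ i ψ, φ = Fm.box i ψ) ∨ (∃ i ψ, φ = Fm.dia i ψ)

def conj : List (Fm A P) → Fm A P
  | [] => Fm.tru
  | φ :: L => φ.and (conj L)

def disj : List (Fm A P) → Fm A P
  | [] => Fm.bot
  | φ :: L => φ.or (disj L)

def EpTerm (L : List (Fm A P)) : Prop := ∀ c ∈ L, Basic c

def LogSep (L : List (Fm A P)) : Prop :=
  ∀ η : Fm A P, Basic η → Entails (conj L) η → ∃ α ∈ L, Entails α η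

def fvars : Fm A P → Set P
  | .tru => ∅
  | .var p => {p}
  | .neg φ => fvars φ
  | .and φ ψ => fvars φ ∪ fvars ψ
  | .box _ φ => fvars φ

def fsize : Fm A P → ℕ
  | .tru => 1
  | .var _ => 1
  | .neg φ => fsize φ + 1
  | .and φ ψ => fsize φ + fsize ψ + 1
  | .box _ φ => fsize φ + 1

lemma sat_conj (M : KM A P) (s : M.S) (L : List (Fm A P)) :
    Sat M s (conj L) ↔ ∀ φ ∈ L, Sat M s φ := by
  induction L with
  | nil => simp [conj, Sat]
  | cons a L ih => simp [conj, Sat, ih]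

lemma sat_dia (M : KM A P) (s : M.S) (i : A) (φ : Fm A P) :
    Sat M s (Fm.dia i φ) ↔ ∃ t, M.R i s t ∧ Sat M t φ := by
  simp only [Fm.dia, Sat]
  push_neg
  rfl

theorem ste_bounded_conjunction
    (B : List A) (α α' : Fm A P) (β β' : A → Fm A P) (γ γ' : A → List (Fm A P))
    (hα : IsProp α) (hα' : IsProp α')
    (hγ : ∀ i ∈ B, ∀ g ∈ γ i, Entails g (β i))
    (hγ' : ∀ i ∈ B, ∀ g ∈ γ' i, Entails g (β' i))
    (α'' : Fm A P) (β'' : A → Fm A P)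
    (hα'' : FEquiv α'' (α.and α'))
    (hβ'' : ∀ i ∈ B, FEquiv (β'' i) ((β i).and (β' i))) :
    let ψ : Fm A P :=
      α.and (conj (B.map fun i => (Fm.box i (β i)).and (conj ((γ i).map (Fm.dia i)))))
    let ψ' : Fm A P :=
      α'.and (conj (B.map fun i => (Fm.box i (β' i)).and (conj ((γ' i).map (Fm.dia i)))))
    let ψ'' : Fm A P :=
      α''.and (conj (B.map fun i => (Fm.box i (β'' i)).and
        ((conj ((γ i).map fun g => Fm.dia i ((β' i).and g))).and
         (conj ((γ' i).map fun g => Fm.dia i ((β i).and g))))))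
    FEquiv (ψ.and ψ') ψ'' ∧
    (∀ i ∈ B, ∀ g ∈ γ i, Entails ((β' i).and g) ((β i).and (β' i))) ∧
    (∀ i ∈ B, ∀ g ∈ γ' i, Entails ((β i).and g) ((β i).and (β' i))) := by
  intro ψ ψ' ψ''
  refine ⟨⟨?_, ?_⟩, ?_, ?_⟩
  · -- ψ ∧ ψ' ⊨ ψ''
    intro M s hs
    obtain ⟨⟨hsα, hsc⟩, hsα', hsc'⟩ :
        (Sat M s α ∧ Sat M s _) ∧ Sat M s α' ∧ Sat M s _ := hs
    rw [sat_conj] at hsc hsc'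
    refine ⟨hα''.2 M s ⟨hsα, hsα'⟩, ?_⟩
    rw [sat_conj]
    intro φ hφ
    simp only [List.mem_map] at hφ
    obtain ⟨i, hi, rfl⟩ := hφ
    have h1 := hsc _ (List.mem_map_of_mem hi)
    have h2 := hsc' _ (List.mem_map_of_mem hi)
    obtain ⟨hb1, hd1⟩ : Sat M s (Fm.box i (β i)) ∧ Sat M s _ := h1
    obtain ⟨hb2, hd2⟩ : Sat M s (Fm.box i (β' i)) ∧ Sat M s _ := h2
    rw [sat_conj] at hd1 hd2
    refine ⟨fun t ht => (hβ'' i hi).2 M t ⟨hb1 t ht, hb2 t ht⟩, ?_, ?_⟩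
    · rw [sat_conj]
      intro φ hφ
      simp only [List.mem_map] at hφ
      obtain ⟨g, hg, rfl⟩ := hφ
      have := hd1 _ (List.mem_map_of_mem hg)
      rw [sat_dia] at this ⊢
      obtain ⟨t, ht, hst⟩ := this
      exact ⟨t, ht, hb2 t ht, hst⟩
    · rw [sat_conj]
      intro φ hφ
      simp only [List.mem_map] at hφ
      obtain ⟨g, hg, rfl⟩ := hφ
      have := hd2 _ (List.mem_map_of_mem hg)
      rw [sat_dia] at this ⊢
      obtain ⟨t, ht, hst⟩ := this
      exact ⟨t, ht, hb1 t ht, hst⟩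
  · -- ψ'' ⊨ ψ ∧ ψ'
    intro M s hs
    obtain ⟨hsα'', hsc''⟩ : Sat M s α'' ∧ Sat M s _ := hs
    rw [sat_conj] at hsc''
    obtain ⟨hsα, hsα'⟩ : Sat M s α ∧ Sat M s α' := hα''.1 M s hsα''
    have key : ∀ i ∈ B,
        (Sat M s (Fm.box i (β i)) ∧ Sat M s (conj ((γ i).map (Fm.dia i)))) ∧
        (Sat M s (Fm.box i (β' i)) ∧ Sat M s (conj ((γ' i).map (Fm.dia i)))) := by
      intro i hi
      have h := hsc'' _ (List.mem_map_of_mem hi)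
      obtain ⟨hb, hd⟩ : Sat M s (Fm.box i (β'' i)) ∧ Sat M s _ := h
      obtain ⟨hd1, hd2⟩ : Sat M s _ ∧ Sat M s _ := hd
      rw [sat_conj] at hd1 hd2
      have hbb : ∀ t, M.R i s t → Sat M t (β i) ∧ Sat M t (β' i) :=
        fun t ht => (hβ'' i hi).1 M t (hb t ht)
      refine ⟨⟨fun t ht => (hbb t ht).1, ?_⟩, fun t ht => (hbb t ht).2, ?_⟩
      · rw [sat_conj]
        intro φ hφ
        simp only [List.mem_map] at hφ
        obtain ⟨g, hg, rfl⟩ := hφ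
        have := hd1 _ (List.mem_map_of_mem hg)
        rw [sat_dia] at this ⊢
        obtain ⟨t, ht, _, hst⟩ := this
        exact ⟨t, ht, hst⟩
      · rw [sat_conj]
        intro φ hφ
        simp only [List.mem_map] at hφ
        obtain ⟨g, hg, rfl⟩ := hφ
        have := hd2 _ (List.mem_map_of_mem hg)
        rw [sat_dia] at this ⊢
        obtain ⟨t, ht, _, hst⟩ := this
        exact ⟨t, ht, hst⟩
    refine ⟨⟨hsα, ?_⟩, hsα', ?_⟩ <;>
      · rw [sat_conj]
        intro φ hφ
        simp only [List.mem_map] at hφ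
        obtain ⟨i, hi, rfl⟩ := hφ
        first
          | exact (key i hi).1
          | exact (key i hi).2
  · exact fun i hi g hg M s h => ⟨hγ i hi g hg M s h.2, h.1⟩
  · exact fun i hi g hg M s h => ⟨h.1, hγ' i hi g hg M s h.2⟩
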